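/- arXiv:1412.0483 — 2 statements merged into one kernel-verified Lean document; each statement's English description precedes it below -/
import Mathlib

section
/- Let 1 < p < ∞, a ∈ ℤ, P ∈ D a dyadic cube in ℝⁿ, and let (w,σ) be a pair of weights with 0 < ⨍_P σ < ∞ and 2^a < (⨍_P w)(⨍_P σ)^{p−1} ≤ 2^{a+1}. Let S ⊆ D be a sparse family all of whose cubes are contained in P and such that every Q ∈ S satisfies ⨍_Q σ ≤ 2·⨍_P σ and 2^a < (⨍_Q w)(⨍_Q σ)^{p−1} ≤ 2^{a+1}. Then there exist constants c > 0 and C, depending only on n and p (in particular independent of a, P, S, w, σ), such that for all t > 0: w({x ∈ P : T^S σ(x) > t·⨍_P σ}) ≤ C·e^{−ct}·w(P). -/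
noncomputable section
open MeasureTheory ENNReal Set Metric

/-- `ℝⁿ` as a Euclidean space. -/
abbrev En (n : ℕ) := EuclideanSpace ℝ (Fin n)

/-- `w(A) = ∫_A w`, for a nonnegative function `w` (as an extended nonnegative real). -/
def wInt {n : ℕ} (w : En n → ℝ) (A : Set (En n)) : ℝ≥0∞ :=
  ∫⁻ y in A, ENNReal.ofReal (w y)

/-- The average `⨍_A w = (1/|A|) ∫_A w` (as an extended nonnegative real). -/
def avgSet {n : ℕ} (w : En n → ℝ) (A : Set (En n)) : ℝ≥0∞ :=
  (volume A)⁻¹ * wInt w A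

/-- The uncentered Hardy–Littlewood maximal operator `Mf(x) = sup_{B ∋ x} ⨍_B |f|`. -/
def maxOpE {n : ℕ} (f : En n → ℝ) (x : En n) : ℝ≥0∞ :=
  ⨆ (c : En n) (r : ℝ) (_ : 0 < r) (_ : x ∈ ball c r),
    avgSet (fun y => |f y|) (ball c r)

/-- The weak `A∞` characteristic `[w]_{A∞^weak} = sup_B (1/w(2B)) ∫_B M(1_B w)`. -/
def weakAinfE {n : ℕ} (w : En n → ℝ) : ℝ≥0∞ :=
  ⨆ (c : En n) (r : ℝ) (_ : 0 < r),
    (wInt w (ball c (2 * r)))⁻¹ *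
      ∫⁻ y in ball c r, maxOpE ((ball c r).indicator w) y

/-- The joint `A_p` characteristic `[w,σ]_{A_p} = sup_B (⨍_B w)(⨍_B σ)^{p-1}`. -/
def apCharE {n : ℕ} (p : ℝ) (w σ : En n → ℝ) : ℝ≥0∞ :=
  ⨆ (c : En n) (r : ℝ) (_ : 0 < r),
    avgSet w (ball c r) * avgSet σ (ball c r) ^ (p - 1)

/-- The weighted `L^p` norm `(∫ |g|^p w)^{1/p}` (as an extended nonnegative real). -/
def wLp {n : ℕ} (p : ℝ) (w : En n → ℝ) (g : En n → ℝ) : ℝ≥0∞ :=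
  (∫⁻ x, ENNReal.ofReal |g x| ^ p * ENNReal.ofReal (w x)) ^ (1 / p)

/-- A weight on `ℝⁿ`: a nonnegative, measurable, locally integrable function. -/
def IsWeightE {n : ℕ} (w : En n → ℝ) : Prop :=
  (∀ x, 0 ≤ w x) ∧ Measurable w ∧ LocallyIntegrable w volume

/-- The standard dyadic cube `2^{-k}([0,1)ⁿ + m)`. -/
def dyadicCube (n : ℕ) (k : ℤ) (m : Fin n → ℤ) : Set (En n) :=
  {x | ∀ i, (m i : ℝ) * (2 : ℝ) ^ (-k) ≤ x i ∧ x i < ((m i : ℝ) + 1) * (2 : ℝ) ^ (-k)}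

/-- The standard dyadic grid `𝒟` in `ℝⁿ`. -/
def stdDyadic (n : ℕ) : Set (Set (En n)) := {Q | ∃ k m, Q = dyadicCube n k m}

/-- A sparse family `S ⊆ 𝒟`: for every `Q ∈ S`,
`|Q ∖ ⋃ {Q' ∈ S : Q' ⊊ Q}| ≥ |Q|/2`. -/
def IsSparseFam {n : ℕ} (S : Set (Set (En n))) : Prop :=
  S ⊆ stdDyadic n ∧
    ∀ Q ∈ S, volume Q ≤ 2 * volume (Q \ ⋃₀ {Q' | Q' ∈ S ∧ Q' ⊂ Q})

/-- The sparse operator `T^S g = ∑_{Q ∈ S} (⨍_Q g) 1_Q` (real-valued version). -/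
def sparseOp {n : ℕ} (S : Set (Set (En n))) (g : En n → ℝ) (x : En n) : ℝ :=
  ∑' Q : S, Set.indicator (Q : Set (En n)) (fun _ => ⨍ y in (Q : Set (En n)), g y) x

/-- The sparse operator applied to a nonnegative function (`ℝ≥0∞`-valued version). -/
def sparseOpNN {n : ℕ} (S : Set (Set (En n))) (w : En n → ℝ) (x : En n) : ℝ≥0∞ :=
  ∑' Q : S, Set.indicator (Q : Set (En n)) (fun _ => avgSet w (Q : Set (En n))) x


-- Part 1 : dyadic basics

lemma dyadicCube_eq_preimage (n : ℕ) (k : ℤ) (m : Fin n → ℤ) :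
    dyadicCube n k m = (MeasurableEquiv.toLp 2 (Fin n → ℝ)).symm ⁻¹'
      (Set.univ.pi fun i => Ico ((m i : ℝ) * (2:ℝ)^(-k)) (((m i : ℝ)+1) * (2:ℝ)^(-k))) := by
  ext x
  simp [dyadicCube, Set.mem_pi]

lemma measurableSet_dyadicCube (n : ℕ) (k : ℤ) (m : Fin n → ℤ) :
    MeasurableSet (dyadicCube n k m) := by
  rw [dyadicCube_eq_preimage]
  exact (MeasurableEquiv.measurable _) (MeasurableSet.univ_pi fun i => measurableSet_Ico)

lemma volume_dyadicCube (n : ℕ) (k : ℤ) (m : Fin n → ℤ) :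
    volume (dyadicCube n k m) = (ENNReal.ofReal ((2:ℝ)^(-k)))^n := by
  rw [dyadicCube_eq_preimage]
  rw [(EuclideanSpace.volume_preserving_symm_measurableEquiv_toLp (Fin n)).measure_preimage
    (MeasurableSet.univ_pi fun i => measurableSet_Ico).nullMeasurableSet]
  rw [volume_pi_pi]
  simp only [Real.volume_Ico]
  have h : ∀ x : Fin n, ((m x : ℝ)+1) * (2:ℝ)^(-k) - (m x : ℝ) * (2:ℝ)^(-k) = (2:ℝ)^(-k) := by
    intro x; ring
  simp only [h, Finset.prod_const, Finset.card_univ, Fintype.card_fin]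

lemma volume_dyadicCube_pos (n : ℕ) (k : ℤ) (m : Fin n → ℤ) :
    0 < volume (dyadicCube n k m) := by
  rw [volume_dyadicCube]
  positivity

lemma volume_dyadicCube_lt_top (n : ℕ) (k : ℤ) (m : Fin n → ℤ) :
    volume (dyadicCube n k m) < ⊤ := by
  rw [volume_dyadicCube]
  exact ENNReal.pow_lt_top ENNReal.ofReal_lt_top

lemma dyadicCube_nonempty (n : ℕ) (k : ℤ) (m : Fin n → ℤ) :
    (dyadicCube n k m).Nonempty := by
  refine ⟨WithLp.toLp 2 (fun i => (m i : ℝ) * (2:ℝ)^(-k) : Fin n → ℝ), fun i => ?_⟩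
  have h2 : (0:ℝ) < (2:ℝ)^(-k) := zpow_pos (by norm_num) _
  refine ⟨le_refl _, ?_⟩
  show (m i : ℝ) * (2:ℝ)^(-k) < ((m i : ℝ)+1) * (2:ℝ)^(-k)
  nlinarith

-- Part 2 : nesting

lemma dyadic_subset_of_le {n : ℕ} {k k' : ℤ} {m m' : Fin n → ℤ} (hk : k ≤ k')
    {x : En n} (h1 : x ∈ dyadicCube n k m) (h2 : x ∈ dyadicCube n k' m') :
    dyadicCube n k' m' ⊆ dyadicCube n k m := by
  intro y hy i
  have s_pos : (0:ℝ) < (2:ℝ)^(-k') := zpow_pos (by norm_num) _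
  set e : ℕ := (k' - k).toNat with he
  have hek : (e : ℤ) = k' - k := Int.toNat_of_nonneg (sub_nonneg.mpr hk)
  have hr : (2:ℝ)^(-k) = ((2:ℕ)^e : ℝ) * (2:ℝ)^(-k') := by
    push_cast
    rw [← zpow_natCast (2:ℝ) e, ← zpow_add₀ (by norm_num : (2:ℝ) ≠ 0)]
    congr 1
    omega
  obtain ⟨h1l, h1r⟩ := h1 i
  obtain ⟨h2l, h2r⟩ := h2 i
  obtain ⟨hyl, hyr⟩ := hy i
  set s : ℝ := (2:ℝ)^(-k') with hs
  rw [hr, ← mul_assoc] at h1l h1r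
  have key1 : ((m i : ℝ)) * ((2:ℕ)^e : ℝ) ≤ (m' i : ℝ) := by
    have hab : ((m i : ℝ)) * ((2:ℕ)^e : ℝ) < (m' i : ℝ) + 1 :=
      (mul_lt_mul_iff_left₀ s_pos).mp (lt_of_le_of_lt h1l h2r)
    have h' : (m i * 2^e : ℤ) < m' i + 1 := by exact_mod_cast hab
    have h'' : (m i * 2^e : ℤ) ≤ m' i := Int.lt_add_one_iff.mp h'
    exact_mod_cast h''
  have key2 : ((m' i : ℝ)) + 1 ≤ ((m i : ℝ) + 1) * ((2:ℕ)^e : ℝ) := by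
    have hab : (m' i : ℝ) < ((m i : ℝ) + 1) * ((2:ℕ)^e : ℝ) :=
      (mul_lt_mul_iff_left₀ s_pos).mp (lt_of_le_of_lt h2l h1r)
    have h' : (m' i : ℤ) < (m i + 1) * 2^e := by exact_mod_cast hab
    have h'' : (m' i : ℤ) + 1 ≤ (m i + 1) * 2^e := h'
    exact_mod_cast h''
  constructor
  · rw [hr, ← mul_assoc]
    calc (m i : ℝ) * ((2:ℕ)^e : ℝ) * s ≤ (m' i : ℝ) * s :=
          mul_le_mul_of_nonneg_right key1 s_pos.le
      _ ≤ y i := hyl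
  · rw [hr, ← mul_assoc]
    calc y i < ((m' i : ℝ) + 1) * s := hyr
      _ ≤ ((m i : ℝ) + 1) * ((2:ℕ)^e : ℝ) * s :=
          mul_le_mul_of_nonneg_right key2 s_pos.le

lemma stdDyadic_nested {n : ℕ} {Q1 Q2 : Set (En n)} (h1 : Q1 ∈ stdDyadic n)
    (h2 : Q2 ∈ stdDyadic n) {x : En n} (hx1 : x ∈ Q1) (hx2 : x ∈ Q2) :
    Q1 ⊆ Q2 ∨ Q2 ⊆ Q1 := by
  obtain ⟨k, m, rfl⟩ := h1
  obtain ⟨k', m', rfl⟩ := h2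
  rcases le_total k k' with h | h
  · exact Or.inr (dyadic_subset_of_le h hx1 hx2)
  · exact Or.inl (dyadic_subset_of_le h hx2 hx1)

lemma stdDyadic_countable (n : ℕ) : (stdDyadic n).Countable := by
  have : stdDyadic n ⊆ Set.range (fun km : ℤ × (Fin n → ℤ) => dyadicCube n km.1 km.2) := by
    rintro Q ⟨k, m, rfl⟩; exact ⟨(k, m), rfl⟩
  exact (Set.countable_range _).mono this

-- Part 3 : sparse family structure

lemma std_measurable {n : ℕ} {Q : Set (En n)} (h : Q ∈ stdDyadic n) : MeasurableSet Q := by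
  obtain ⟨k, m, rfl⟩ := h; exact measurableSet_dyadicCube n k m

lemma std_nonempty {n : ℕ} {Q : Set (En n)} (h : Q ∈ stdDyadic n) : Q.Nonempty := by
  obtain ⟨k, m, rfl⟩ := h; exact dyadicCube_nonempty n k m

lemma std_vol_pos {n : ℕ} {Q : Set (En n)} (h : Q ∈ stdDyadic n) : 0 < volume Q := by
  obtain ⟨k, m, rfl⟩ := h; exact volume_dyadicCube_pos n k m

lemma std_vol_lt_top {n : ℕ} {Q : Set (En n)} (h : Q ∈ stdDyadic n) : volume Q < ⊤ := by
  obtain ⟨k, m, rfl⟩ := h; exact volume_dyadicCube_lt_top n k m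

/-- The union of strict `S`-subcubes of `Q`. -/
def strictUnion {n : ℕ} (S : Set (Set (En n))) (Q : Set (En n)) : Set (En n) :=
  ⋃₀ {Q' | Q' ∈ S ∧ Q' ⊂ Q}

section Sparse

variable {n : ℕ} {S : Set (Set (En n))} (hS : IsSparseFam S)

set_option linter.unusedSectionVars false
include hS

lemma sub_countable {T : Set (Set (En n))} (hT : T ⊆ S) : T.Countable :=
  ((stdDyadic_countable n).mono hS.1).mono hT

lemma strictUnion_meas (Q : Set (En n)) : MeasurableSet (strictUnion S Q) := by
  apply MeasurableSet.sUnion (sub_countable hS (fun Q' h => h.1))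
  exact fun Q' h => std_measurable (hS.1 h.1)

lemma strictUnion_subset (Q : Set (En n)) : strictUnion S Q ⊆ Q := by
  rintro x ⟨Q', ⟨_, hsub⟩, hx⟩; exact hsub.1 hx

lemma two_mul_strictUnion_le {Q : Set (En n)} (hQ : Q ∈ S) :
    2 * volume (strictUnion S Q) ≤ volume Q := by
  have hX : MeasurableSet (strictUnion S Q) := strictUnion_meas hS Q
  have hXQ : strictUnion S Q ⊆ Q := strictUnion_subset hS Q
  have hfin : volume Q < ⊤ := std_vol_lt_top (hS.1 hQ)
  have hsplit : volume (Q \ strictUnion S Q) + volume (strictUnion S Q) = volume Q := by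
    have := measure_diff_add_inter Q hX (μ := volume)
    rwa [Set.inter_eq_right.mpr hXQ] at this
  have hsp := hS.2 Q hQ
  have key : 2 * volume (strictUnion S Q) + volume Q ≤ volume Q + volume Q := by
    calc 2 * volume (strictUnion S Q) + volume Q
        ≤ 2 * volume (strictUnion S Q) + 2 * volume (Q \ strictUnion S Q) :=
          add_le_add le_rfl hsp
      _ = 2 * (volume (Q \ strictUnion S Q) + volume (strictUnion S Q)) := by ring
      _ = 2 * volume Q := by rw [hsplit]
      _ = volume Q + volume Q := two_mul _
  exact (ENNReal.add_le_add_iff_right hfin.ne).mp key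

lemma vol_double {Q Q' : Set (En n)} (hQ : Q ∈ S) (hQ' : Q' ∈ S) (hss : Q ⊂ Q') :
    2 * volume Q ≤ volume Q' := by
  refine le_trans ?_ (two_mul_strictUnion_le hS hQ')
  have : Q ⊆ strictUnion S Q' := fun x hx => ⟨Q, ⟨hQ, hss⟩, hx⟩
  exact mul_le_mul_right (measure_mono this) 2

lemma mem_nested {Q Q' : Set (En n)} (hQ : Q ∈ S) (hQ' : Q' ∈ S) 
    (hne : (Q ∩ Q').Nonempty) : Q ⊆ Q' ∨ Q' ⊆ Q := by
  obtain ⟨x, hx1, hx2⟩ := hne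
  exact stdDyadic_nested (hS.1 hQ) (hS.1 hQ') hx1 hx2

/-- the set of `S`-supercubes (incl. itself) of a cube `R ∈ S` -/
lemma sup_chain {R : Set (En n)} (hR : R ∈ S) {Q Q' : Set (En n)}
    (h1 : Q ∈ S ∧ R ⊆ Q) (h2 : Q' ∈ S ∧ R ⊆ Q') : Q ⊆ Q' ∨ Q' ⊆ Q := by
  obtain ⟨x, hx⟩ := std_nonempty (hS.1 hR)
  exact stdDyadic_nested (hS.1 h1.1) (hS.1 h2.1) (h1.2 hx) (h2.2 hx)

lemma sup_finite {P : Set (En n)} (hP : P ∈ stdDyadic n) (hSP : ∀ Q ∈ S, Q ⊆ P)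
    {R : Set (En n)} (hR : R ∈ S) : {Q' | Q' ∈ S ∧ R ⊆ Q'}.Finite := by
  set A := {Q' | Q' ∈ S ∧ R ⊆ Q'}
  have hvolR : 0 < volume R := std_vol_pos (hS.1 hR)
  have hvolP : volume P < ⊤ := std_vol_lt_top hP
  set f : Set (En n) → ℤ := fun Q => ⌊Real.logb 2 (volume Q).toReal⌋
  have hmono : ∀ Q Q', Q ∈ A → Q' ∈ A → Q ⊂ Q' → f Q < f Q' := by
    intro Q Q' hQA hQ'A hss
    have h2v : 2 * volume Q ≤ volume Q' := vol_double hS hQA.1 hQ'A.1 hss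
    have hQpos : 0 < volume Q := lt_of_lt_of_le hvolR (measure_mono hQA.2)
    have hQ'top : volume Q' < ⊤ := lt_of_le_of_lt (measure_mono (hSP _ hQ'A.1)) hvolP
    have hQtop : volume Q' ≠ ⊤ := hQ'top.ne
    have hr : 2 * (volume Q).toReal ≤ (volume Q').toReal := by
      rw [← ENNReal.toReal_ofNat, ← ENNReal.toReal_mul]
      exact ENNReal.toReal_mono hQtop h2v
    have hQr : 0 < (volume Q).toReal := ENNReal.toReal_pos hQpos.ne' 
      (lt_of_le_of_lt (le_trans (le_mul_of_one_le_left zero_le (by norm_num)) h2v) hQ'top).ne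
    have hlog : Real.logb 2 (volume Q).toReal + 1 ≤ Real.logb 2 (volume Q').toReal := by
      have h0 : Real.logb 2 (2 * (volume Q).toReal) ≤ Real.logb 2 (volume Q').toReal :=
        Real.logb_le_logb_of_le (by norm_num) (by linarith) hr
      rwa [Real.logb_mul (by norm_num) hQr.ne',
        Real.logb_self_eq_one (by norm_num), add_comm] at h0
    calc f Q < f Q + 1 := by omega
      _ = ⌊Real.logb 2 (volume Q).toReal + 1⌋ := by rw [Int.floor_add_one]
      _ ≤ f Q' := Int.floor_le_floor hlog
  have hinj : Set.InjOn f A := by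
    intro Q hQ Q' hQ' hfeq
    by_contra hne
    rcases sup_chain hS hR hQ hQ' with h | h
    · rcases eq_or_ne Q Q' with rfl | hne2
      · exact hne rfl
      · exact absurd hfeq (ne_of_lt (hmono Q Q' hQ hQ' ⟨h, fun h2 => hne2 (le_antisymm h h2)⟩))
    · rcases eq_or_ne Q' Q with rfl | hne2
      · exact hne rfl
      · exact absurd hfeq.symm (ne_of_lt (hmono Q' Q hQ' hQ ⟨h, fun h2 => hne2 (le_antisymm h h2)⟩))
  have himage : f '' A ⊆ Set.Icc (⌊Real.logb 2 (volume R).toReal⌋) (⌊Real.logb 2 (volume P).toReal⌋) := by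
    rintro z ⟨Q, hQ, rfl⟩
    have hQpos : 0 < volume Q := lt_of_lt_of_le hvolR (measure_mono hQ.2)
    have hQtop : volume Q < ⊤ := lt_of_le_of_lt (measure_mono (hSP _ hQ.1)) hvolP
    constructor
    · exact Int.floor_le_floor (Real.logb_le_logb_of_le (by norm_num)
        (ENNReal.toReal_pos hvolR.ne' (lt_of_le_of_lt (measure_mono hQ.2) hQtop).ne)
        (ENNReal.toReal_mono hQtop.ne (measure_mono hQ.2)))
    · exact Int.floor_le_floor (Real.logb_le_logb_of_le (by norm_num)
        (ENNReal.toReal_pos hQpos.ne' hQtop.ne)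
        (ENNReal.toReal_mono hvolP.ne (measure_mono (hSP _ hQ.1))))
  exact Set.Finite.of_finite_image ((Set.finite_Icc _ _).subset himage) hinj

end Sparse

-- Part 4 : chains, depth, generations

lemma chain_exists_greatest {α : Type*} {C : Set (Set α)} (hfin : C.Finite) (hne : C.Nonempty)
    (hch : ∀ Q ∈ C, ∀ Q' ∈ C, Q ⊆ Q' ∨ Q' ⊆ Q) : ∃ G ∈ C, ∀ Q ∈ C, Q ⊆ G := by
  obtain ⟨G, hG, hmax⟩ := Set.Finite.exists_maximalFor id C hfin hne
  refine ⟨G, hG, fun Q hQ => ?_⟩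
  rcases hch Q hQ G hG with h | h
  · exact h
  · exact hmax hQ h

lemma chain_exists_least {α : Type*} {C : Set (Set α)} (hfin : C.Finite) (hne : C.Nonempty)
    (hch : ∀ Q ∈ C, ∀ Q' ∈ C, Q ⊆ Q' ∨ Q' ⊆ Q) : ∃ G ∈ C, ∀ Q ∈ C, G ⊆ Q := by
  obtain ⟨G, hG, hmin⟩ := Set.Finite.exists_minimalFor id C hfin hne
  refine ⟨G, hG, fun Q hQ => ?_⟩
  rcases hch Q hQ G hG with h | h
  · exact hmin hQ h
  · exact h

/-- number of strict `S`-supercubes. -/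
def depthS {n : ℕ} (S : Set (Set (En n))) (Q : Set (En n)) : ℕ :=
  ({Q' | Q' ∈ S ∧ Q ⊂ Q'}).ncard

/-- cubes of `S` at depth `g`. -/
def genSet {n : ℕ} (S : Set (Set (En n))) (g : ℕ) : Set (Set (En n)) :=
  {Q | Q ∈ S ∧ depthS S Q = g}

lemma ennreal_half {x y : ℝ≥0∞} (h : 2 * x ≤ y) : x ≤ y * 2⁻¹ := by
  have : (2 * x) * 2⁻¹ ≤ y * 2⁻¹ := mul_le_mul_left h _
  rwa [mul_comm 2 x, mul_assoc, ENNReal.mul_inv_cancel (by norm_num) (by norm_num), mul_one] at this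

section Sparse2

variable {n : ℕ} {S : Set (Set (En n))} (hS : IsSparseFam S)
  {P : Set (En n)} (hP : P ∈ stdDyadic n) (hSP : ∀ Q ∈ S, Q ⊆ P)

set_option linter.unusedSectionVars false

include hS hP hSP

lemma strictSup_finite {R : Set (En n)} (hR : R ∈ S) : {Q' | Q' ∈ S ∧ R ⊂ Q'}.Finite :=
  (sup_finite hS hP hSP hR).subset (fun _ h => ⟨h.1, h.2.1⟩)

lemma depth_lt_of_ssub {Q Q' : Set (En n)} (hQ : Q ∈ S) (hQ' : Q' ∈ S) (hss : Q ⊂ Q') :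
    depthS S Q' < depthS S Q := by
  apply Set.ncard_lt_ncard _ (strictSup_finite hS hP hSP hQ)
  constructor
  · exact fun Q'' h => ⟨h.1, hss.trans h.2⟩
  · intro hcon
    exact ssubset_irrefl Q' (hcon ⟨hQ', hss⟩).2

lemma exists_parent {Q : Set (En n)} (hQ : Q ∈ S) (hub : ∃ Q' ∈ S, Q ⊂ Q') :
    ∃ Pa ∈ S, Q ⊂ Pa ∧ depthS S Pa + 1 = depthS S Q := by
  set A := {Q' | Q' ∈ S ∧ Q ⊂ Q'} with hA
  have hfin : A.Finite := strictSup_finite hS hP hSP hQ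
  have hne : A.Nonempty := by obtain ⟨Q', h1, h2⟩ := hub; exact ⟨Q', h1, h2⟩
  have hch : ∀ Q1 ∈ A, ∀ Q2 ∈ A, Q1 ⊆ Q2 ∨ Q2 ⊆ Q1 := by
    intro Q1 h1 Q2 h2
    exact sup_chain hS hQ ⟨h1.1, h1.2.subset⟩ ⟨h2.1, h2.2.subset⟩
  obtain ⟨Pa, hPa, hleast⟩ := chain_exists_least hfin hne hch
  refine ⟨Pa, hPa.1, hPa.2, ?_⟩
  have hkey : {Q'' | Q'' ∈ S ∧ Pa ⊂ Q''} = A \ {Pa} := by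
    ext Q''
    constructor
    · rintro ⟨h1, h2⟩
      exact ⟨⟨h1, hPa.2.trans h2⟩, fun hcon => ssubset_irrefl Pa (hcon ▸ h2)⟩
    · rintro ⟨hmem, hne'⟩
      refine ⟨hmem.1, lt_of_le_of_ne (hleast _ hmem) ?_⟩
      exact fun hcon => hne' (by rw [← hcon]; rfl)
  show ({Q'' | Q'' ∈ S ∧ Pa ⊂ Q''}).ncard + 1 = depthS S Q
  rw [hkey]
  exact Set.ncard_diff_singleton_add_one hPa hfin

lemma exists_ancestor {Q : Set (En n)} (hQ : Q ∈ S) {L : ℕ} (hL : L ≤ depthS S Q) :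
    ∃ A ∈ S, Q ⊆ A ∧ depthS S A = L := by
  obtain ⟨d, hd⟩ : ∃ d, depthS S Q = L + d := ⟨depthS S Q - L, by omega⟩
  clear hL
  induction d generalizing Q with
  | zero => exact ⟨Q, hQ, subset_refl Q, by omega⟩
  | succ d ih =>
    have hne : {Q' | Q' ∈ S ∧ Q ⊂ Q'}.Nonempty := by
      apply Set.nonempty_of_ncard_ne_zero
      show depthS S Q ≠ 0
      omega
    obtain ⟨Q', hQ'⟩ := hne
    obtain ⟨Pa, hPaS, hQPa, hdPa⟩ := exists_parent hS hP hSP hQ ⟨Q', hQ'.1, hQ'.2⟩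
    obtain ⟨A, hA, hsub, hdA⟩ := ih hPaS (by omega)
    exact ⟨A, hA, hQPa.subset.trans hsub, hdA⟩

lemma gen_pairwise_disjoint (g : ℕ) : (genSet S g).Pairwise Disjoint := by
  intro Q1 h1 Q2 h2 hne
  rw [Set.disjoint_iff_inter_eq_empty]
  by_contra hcon
  rcases mem_nested hS h1.1 h2.1 (Set.nonempty_iff_ne_empty.mpr hcon) with h | h
  · have := depth_lt_of_ssub hS hP hSP h1.1 h2.1 ⟨h, fun h' => hne (le_antisymm h h')⟩
    have e1 : depthS S Q1 = g := h1.2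
    have e2 : depthS S Q2 = g := h2.2
    omega
  · have := depth_lt_of_ssub hS hP hSP h2.1 h1.1 ⟨h, fun h' => hne.symm (le_antisymm h h')⟩
    have e1 : depthS S Q1 = g := h1.2
    have e2 : depthS S Q2 = g := h2.2
    omega

lemma vol_gen_le (g : ℕ) : volume (⋃₀ genSet S g) ≤ volume P * 2⁻¹ ^ g := by
  induction g with
  | zero =>
    simp only [pow_zero, mul_one]
    apply measure_mono
    rintro x ⟨Q, hQ, hx⟩
    exact hSP Q hQ.1 hx
  | succ g ih =>
    have hcnt : (genSet S g).Countable := sub_countable hS (fun Q h => h.1)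
    haveI := hcnt.to_subtype
    have hsub : ⋃₀ genSet S (g+1) ⊆ ⋃ (Pa : genSet S g), strictUnion S (Pa : Set (En n)) := by
      rintro x ⟨Q, hQ, hx⟩
      have hne : {Q' | Q' ∈ S ∧ Q ⊂ Q'}.Nonempty := by
        apply Set.nonempty_of_ncard_ne_zero
        show depthS S Q ≠ 0
        have := hQ.2; omega
      obtain ⟨Q', hQ'⟩ := hne
      obtain ⟨Pa, hPaS, hQPa, hdPa⟩ := exists_parent hS hP hSP hQ.1 ⟨Q', hQ'.1, hQ'.2⟩
      have hPag : Pa ∈ genSet S g := ⟨hPaS, by have := hQ.2; omega⟩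
      exact Set.mem_iUnion.mpr ⟨⟨Pa, hPag⟩, ⟨Q, ⟨hQ.1, hQPa⟩, hx⟩⟩
    calc volume (⋃₀ genSet S (g+1)) 
        ≤ volume (⋃ (Pa : genSet S g), strictUnion S (Pa : Set (En n))) := measure_mono hsub
      _ ≤ ∑' (Pa : genSet S g), volume (strictUnion S (Pa : Set (En n))) := measure_iUnion_le _
      _ ≤ ∑' (Pa : genSet S g), volume (Pa : Set (En n)) * 2⁻¹ := by
          apply ENNReal.tsum_le_tsum
          intro Pa
          exact ennreal_half (two_mul_strictUnion_le hS Pa.2.1)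
      _ = (∑' (Pa : genSet S g), volume (Pa : Set (En n))) * 2⁻¹ := ENNReal.tsum_mul_right
      _ = volume (⋃₀ genSet S g) * 2⁻¹ := by
          rw [measure_sUnion hcnt (gen_pairwise_disjoint hS hP hSP g)
            (fun Q h => std_measurable (hS.1 h.1))]
      _ ≤ (volume P * 2⁻¹ ^ g) * 2⁻¹ := mul_le_mul_left ih _
      _ = volume P * 2⁻¹ ^ (g+1) := by rw [mul_assoc, pow_succ]

end Sparse2

-- Part 5 : bands

lemma two_rpow_eq (y : ℝ) : (2:ℝ≥0∞)^y = ENNReal.ofReal ((2:ℝ)^y) := by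
  have : ((2:ℝ≥0∞)) = ENNReal.ofReal 2 := by norm_num
  rw [this, ENNReal.ofReal_rpow_of_pos (by norm_num)]

lemma two_rpow_pos (y : ℝ) : 0 < (2:ℝ≥0∞)^y := by
  rw [two_rpow_eq]; exact ENNReal.ofReal_pos.mpr (Real.rpow_pos_of_pos (by norm_num) y)

lemma two_rpow_ne_top (y : ℝ) : (2:ℝ≥0∞)^y ≠ ⊤ := by
  rw [two_rpow_eq]; exact ENNReal.ofReal_ne_top

lemma le_of_prod_le {x y z : ℝ≥0∞} (h : x * y ≤ z) (hy0 : y ≠ 0) (hyt : y ≠ ⊤) :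
    x ≤ z * y⁻¹ := by
  have h2 := mul_le_mul_left h y⁻¹
  rwa [mul_assoc, ENNReal.mul_inv_cancel hy0 hyt, mul_one] at h2

lemma ge_of_le_prod {x y z : ℝ≥0∞} (h : z ≤ x * y) (hy0 : y ≠ 0) (hyt : y ≠ ⊤) :
    z * y⁻¹ ≤ x := by
  have h2 := mul_le_mul_left h y⁻¹
  rwa [mul_assoc, ENNReal.mul_inv_cancel hy0 hyt, mul_one] at h2

lemma two_pow_inv_nat (m : ℕ) : ((2:ℝ≥0∞)⁻¹)^m = (2:ℝ≥0∞)^(-(m:ℝ)) := by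
  rw [← ENNReal.rpow_natCast ((2:ℝ≥0∞)⁻¹) m, ← ENNReal.rpow_neg_one, ← ENNReal.rpow_mul]
  norm_num

def bandSet {n : ℕ} (S : Set (Set (En n))) (σ : En n → ℝ) (V : ℝ≥0∞) (j : ℕ) :
    Set (Set (En n)) :=
  {Q | Q ∈ S ∧ V * 2^(-(j:ℝ)) < avgSet σ Q ∧ avgSet σ Q ≤ V * 2^(1-(j:ℝ))}

def deepSet {n : ℕ} (S : Set (Set (En n))) (σ : En n → ℝ) (V : ℝ≥0∞) (j L : ℕ) :
    Set (Set (En n)) :=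
  {Q | Q ∈ bandSet S σ V j ∧ ∃ F : Finset (Set (En n)), F.card = L ∧
      ↑F ⊆ bandSet S σ V j ∧ ∀ Q' ∈ F, Q ⊆ Q'}

def maxDeep {n : ℕ} (S : Set (Set (En n))) (σ : En n → ℝ) (V : ℝ≥0∞) (j L : ℕ) :
    Set (Set (En n)) :=
  {G | G ∈ deepSet S σ V j L ∧ ∀ Q ∈ deepSet S σ V j L, G ⊆ Q → G = Q}


lemma tsum_ite_le {α : Type*} (s : Set α) {B : Set α} (hB : B.Finite) (c : ℝ≥0∞) {N : ℕ}
    (hcard : B.ncard ≤ N) :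
    ∑' (q : s), B.indicator (fun _ => c) (q : α) ≤ (N : ℝ≥0∞) * c := by
  classical
  rw [tsum_subtype s (fun q => B.indicator (fun _ => c) q)]
  have h2 : ∑' (q : α), s.indicator (fun y => B.indicator (fun _ => c) y) q
      ≤ ∑' (q : α), B.indicator (fun _ => c) q :=
    ENNReal.tsum_le_tsum (fun q => Set.indicator_le_self _ _ q)
  refine h2.trans ?_
  have h3 : ∑' (q : α), B.indicator (fun _ => c) q = ∑ q ∈ hB.toFinset, B.indicator (fun _ => c) q := by
    apply tsum_eq_sum
    intro b hb
    apply Set.indicator_of_notMem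
    simpa using hb
  rw [h3]
  have h4 : ∑ q ∈ hB.toFinset, B.indicator (fun _ => c) q = hB.toFinset.card • c := by
    rw [← Finset.sum_const]
    apply Finset.sum_congr rfl
    intro q hq
    exact Set.indicator_of_mem (by simpa using hq) _
  rw [h4, nsmul_eq_mul]
  apply mul_le_mul_left
  rw [← Set.ncard_eq_toFinset_card B hB]
  exact_mod_cast hcard

/-- the depth parameter in band `j` for threshold `t` -/
def Lfun (t : ℝ) (j : ℕ) : ℕ := ⌈t * (3/2)^j / 16⌉₊

lemma Lfun_pos {t : ℝ} (ht : 0 < t) (j : ℕ) : 0 < Lfun t j :=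
  Nat.ceil_pos.mpr (by positivity)

lemma Lfun_cast_le {t : ℝ} (ht : 0 < t) (j : ℕ) :
    ((Lfun t j - 1 : ℕ) : ℝ) ≤ t * (3/2)^j / 16 := by
  have h1 : (⌈t * (3/2)^j / 16⌉₊ : ℝ) < t * (3/2)^j / 16 + 1 :=
    Nat.ceil_lt_add_one (by positivity)
  have h2 := Lfun_pos ht j
  have h3 : ((Lfun t j - 1 : ℕ) : ℝ) = (Lfun t j : ℝ) - 1 := by
    rw [Nat.cast_sub h2]; simp
  rw [h3]
  have : (Lfun t j : ℝ) < t * (3/2)^j / 16 + 1 := h1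
  linarith

lemma Lfun_ge {t : ℝ} (ht : 0 < t) (j : ℕ) : t * (j+1) / 32 ≤ (Lfun t j : ℝ) := by
  have h1 : t * (3/2)^j / 16 ≤ (Lfun t j : ℝ) := Nat.le_ceil _
  have h2 : ∀ j : ℕ, ((j:ℝ)+1) / 2 ≤ (3/2)^j := by
    intro j
    induction j with
    | zero => norm_num
    | succ j ih =>
      rcases Nat.eq_zero_or_pos j with hj | hj
      · subst hj; norm_num
      · have hj1 : (1:ℝ) ≤ (j:ℝ) := by exact_mod_cast hj
        have h4 : (0:ℝ) ≤ (3/2)^j := by positivity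
        have h3 : (3/2:ℝ)^(j+1) = 3/2 * (3/2)^j := by ring
        push_cast
        push_cast at ih
        nlinarith [h3, h4, ih, hj1]
  have : t * ((j+1)/2) / 16 ≤ t * (3/2)^j / 16 := by
    apply div_le_div_of_nonneg_right ?_ (by norm_num)
    exact mul_le_mul_of_nonneg_left (h2 j) ht.le
  calc t * (j+1) / 32 = t * (((j:ℝ)+1)/2) / 16 := by ring
    _ ≤ t * (3/2)^j / 16 := this
    _ ≤ (Lfun t j : ℝ) := h1


section Main

variable {n : ℕ} {p : ℝ} (hp : 1 < p) {a : ℤ} {P : Set (En n)} (hP : P ∈ stdDyadic n)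
  {w σ : En n → ℝ}
  (hσ0 : 0 < avgSet σ P) (hσtop : avgSet σ P < ⊤)
  (hPlow : (2 : ℝ≥0∞) ^ a < avgSet w P * avgSet σ P ^ (p - 1))
  {S : Set (Set (En n))} (hS : IsSparseFam S)
  (hSP : ∀ Q ∈ S, Q ⊆ P)
  (hσQ : ∀ Q ∈ S, avgSet σ Q ≤ 2 * avgSet σ P)
  (hApQ : ∀ Q ∈ S, (2 : ℝ≥0∞) ^ a < avgSet w Q * avgSet σ Q ^ (p - 1) ∧
      avgSet w Q * avgSet σ Q ^ (p - 1) ≤ (2 : ℝ≥0∞) ^ (a + 1))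

set_option linter.unusedSectionVars false

lemma hza : ((2:ℝ≥0∞))^a = (2:ℝ≥0∞)^((a:ℤ):ℝ) := (ENNReal.rpow_intCast 2 a).symm

lemma hza1 : ((2:ℝ≥0∞))^(a+1) = (2:ℝ≥0∞)^(((a:ℤ):ℝ)+1) := by
  rw [← ENNReal.rpow_intCast 2 (a+1)]
  push_cast
  ring_nf

include hp hApQ in
lemma avgσ_pos {Q : Set (En n)} (hQ : Q ∈ S) : 0 < avgSet σ Q := by
  rcases eq_or_ne (avgSet σ Q) 0 with h | h
  · exfalso
    have h1 := (hApQ Q hQ).1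
    rw [h, ENNReal.zero_rpow_of_pos (by linarith), mul_zero] at h1
    simp at h1
  · exact pos_iff_ne_zero.mpr h

include hσtop hσQ in
lemma avgσ_lt_top' {Q : Set (En n)} (hQ : Q ∈ S) : avgSet σ Q < ⊤ :=
  lt_of_le_of_lt (hσQ Q hQ) (by
    rw [two_mul]
    exact ENNReal.add_lt_top.mpr ⟨hσtop, hσtop⟩)

include hp hσ0 hσtop hσQ hApQ in
lemma band_exists {Q : Set (En n)} (hQ : Q ∈ S) : ∃ j : ℕ, Q ∈ bandSet S σ (avgSet σ P) j := by
  classical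
  set V := avgSet σ P
  set A := avgSet σ Q with hA
  have hA0 : 0 < A := avgσ_pos hp hApQ hQ
  have hAtop : A < ⊤ := avgσ_lt_top' hσtop hσQ hQ
  set Pr : ℕ → Prop := fun j => A ≤ V * 2^(1-(j:ℝ))
  have hP0 : Pr 0 := by
    show A ≤ V * 2^(1-(0:ℕ):ℝ)
    push_cast
    rw [sub_zero, ENNReal.rpow_one, mul_comm]
    exact hσQ Q hQ

  have hPN : ∃ N, ¬ Pr N := by
    have hdivtop : 2 * V / A ≠ ⊤ := by
      apply (ENNReal.div_lt_top _ hA0.ne').ne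
      exact (by rw [two_mul]; exact ENNReal.add_lt_top.mpr ⟨hσtop, hσtop⟩ : 2*V < ⊤).ne
    obtain ⟨N, hN⟩ := ENNReal.exists_nat_gt hdivtop
    refine ⟨N, fun hcon => ?_⟩
    have h2N : (N : ℝ≥0∞) ≤ 2^N := by exact_mod_cast (Nat.lt_two_pow_self (n := N)).le
    have hlt : 2 * V / A < 2^N := lt_of_lt_of_le hN h2N
    have hlt2 : 2 * V < 2^N * A := by
      rw [ENNReal.div_lt_iff (Or.inl hA0.ne') (Or.inl hAtop.ne)] at hlt
      exact hlt
    -- from hcon : A ≤ V * 2^(1-N) we get 2^N * A ≤ 2 * V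
    have hcon2 : 2^N * A ≤ 2 * V := by
      have := mul_le_mul_right hcon (2^(N:ℝ))
      rw [← mul_assoc, mul_comm ((2:ℝ≥0∞)^(N:ℝ)) V, mul_assoc, ← ENNReal.rpow_add _ _ (by norm_num) (by norm_num)] at this
      have he : (N:ℝ) + (1 - (N:ℝ)) = 1 := by ring
      rw [he, ENNReal.rpow_one, mul_comm V 2] at this
      calc (2:ℝ≥0∞)^N * A = 2^(N:ℝ) * A := by rw [← ENNReal.rpow_natCast 2 N]
        _ ≤ 2 * V := this
    exact absurd (lt_of_lt_of_le hlt2 hcon2) (lt_irrefl _)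
  obtain ⟨N, hN⟩ := hPN
  have hle : Nat.findGreatest Pr N ≤ N := Nat.findGreatest_le N
  have hlt : Nat.findGreatest Pr N < N := by
    rcases lt_or_eq_of_le hle with h | h
    · exact h
    · exfalso
      apply hN
      rw [← h]
      exact Nat.findGreatest_spec (m := 0) (Nat.zero_le N) hP0
  set j := Nat.findGreatest Pr N with hj
  have hspec : Pr j := Nat.findGreatest_spec (m := 0) (Nat.zero_le N) hP0
  have hnot : ¬ Pr (j+1) := Nat.findGreatest_is_greatest (Nat.lt_succ_self _) (by omega)
  refine ⟨j, hQ, ?_, hspec⟩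
  -- V * 2^(-j) < A  from  ¬ (A ≤ V * 2^(1-(j+1)))
  have : V * 2^(1-((j+1:ℕ)):ℝ) < A := not_le.mp hnot
  have he : (1:ℝ) - ((j+1:ℕ):ℝ) = -(j:ℝ) := by push_cast; ring
  rwa [he] at this

include hp hσ0 hσtop hσQ hApQ in
lemma band_avgw_le {Q : Set (En n)} {j : ℕ} (hQ : Q ∈ bandSet S σ (avgSet σ P) j) :
    avgSet w Q ≤ 2^(((a:ℤ):ℝ)+1) * (((avgSet σ P) * 2^(-(j:ℝ)))^(p-1))⁻¹ := by
  obtain ⟨hQS, hlow, hhigh⟩ := hQ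
  have hσp : 0 < avgSet σ Q := avgσ_pos hp hApQ hQS
  have hσt : avgSet σ Q ≠ ⊤ := (avgσ_lt_top' hσtop hσQ hQS).ne
  have hy0 : avgSet σ Q ^ (p-1) ≠ 0 := (ENNReal.rpow_pos hσp hσt).ne'
  have hyt : avgSet σ Q ^ (p-1) ≠ ⊤ := ENNReal.rpow_ne_top_of_nonneg (by linarith) hσt
  have h1 : avgSet w Q ≤ 2^(a+1) * ((avgSet σ Q ^ (p-1)))⁻¹ :=
    le_of_prod_le (hApQ Q hQS).2 hy0 hyt
  rw [hza1 (a := a)] at h1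
  refine h1.trans (mul_le_mul_right ?_ _)
  rw [ENNReal.inv_le_inv]
  exact ENNReal.rpow_le_rpow hlow.le (by linarith)

include hp hP hσ0 hσtop hPlow in
lemma volP_le : volume P * ((2:ℝ≥0∞)^((a:ℤ):ℝ) * (((avgSet σ P))^(p-1))⁻¹) ≤ wInt w P := by
  have hvolP0 : volume P ≠ 0 := (std_vol_pos hP).ne'
  have hvolPt : volume P ≠ ⊤ := (std_vol_lt_top hP).ne
  have hX0 : (avgSet σ P)^(p-1) ≠ 0 := (ENNReal.rpow_pos hσ0 hσtop.ne).ne'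
  have hXt : (avgSet σ P)^(p-1) ≠ ⊤ := ENNReal.rpow_ne_top_of_nonneg (by linarith) hσtop.ne
  have havgw : (2:ℝ≥0∞)^((a:ℤ):ℝ) * ((avgSet σ P)^(p-1))⁻¹ ≤ avgSet w P := by
    have := ge_of_le_prod (hPlow.le.trans (le_refl _)) hX0 hXt
    rwa [hza (a:=a)] at this
  calc volume P * ((2:ℝ≥0∞)^((a:ℤ):ℝ) * (((avgSet σ P))^(p-1))⁻¹)
      ≤ volume P * avgSet w P := mul_le_mul_right havgw _
    _ = wInt w P := by
        rw [avgSet, ← mul_assoc, ENNReal.mul_inv_cancel hvolP0 hvolPt, one_mul]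

include hp hP hσ0 hσtop hPlow in
lemma Bj_volP (j : ℕ) :
    (2^(((a:ℤ):ℝ)+1) * (((avgSet σ P) * 2^(-(j:ℝ)))^(p-1))⁻¹) * volume P
      ≤ 2^((1:ℝ) + (j:ℝ)*(p-1)) * wInt w P := by
  set V := avgSet σ P with hV
  have hX0 : V^(p-1) ≠ 0 := (ENNReal.rpow_pos hσ0 hσtop.ne).ne'
  have hXt : V^(p-1) ≠ ⊤ := ENNReal.rpow_ne_top_of_nonneg (by linarith) hσtop.ne
  have hsplit : ((V * 2^(-(j:ℝ)))^(p-1))⁻¹ = (V^(p-1))⁻¹ * 2^((j:ℝ)*(p-1)) := by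
    rw [ENNReal.mul_rpow_of_ne_top hσtop.ne (two_rpow_ne_top _),
      ENNReal.mul_inv (Or.inl hX0) (Or.inl hXt)]
    congr 1
    rw [← ENNReal.rpow_neg, ← ENNReal.rpow_mul]
    ring_nf
  -- volume P bound
  have hvol : volume P ≤ wInt w P * ((2:ℝ≥0∞)^((a:ℤ):ℝ))⁻¹ * V^(p-1) := by
    have h1 := volP_le hp hP hσ0 hσtop hPlow
    have h2 := le_of_prod_le h1 (by
        exact mul_ne_zero (two_rpow_pos _).ne' (ENNReal.inv_pos.mpr hXt).ne')
      (by
        exact ENNReal.mul_ne_top (two_rpow_ne_top _) (by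
          simp only [ne_eq, ENNReal.inv_eq_top]
          exact hX0))
    rw [ENNReal.mul_inv (Or.inl (two_rpow_pos ((a:ℤ):ℝ)).ne') (Or.inl (two_rpow_ne_top _)),
      inv_inv, ← mul_assoc] at h2
    exact h2
  calc (2^(((a:ℤ):ℝ)+1) * ((V * 2^(-(j:ℝ)))^(p-1))⁻¹) * volume P
      ≤ (2^(((a:ℤ):ℝ)+1) * ((V * 2^(-(j:ℝ)))^(p-1))⁻¹) *
          (wInt w P * ((2:ℝ≥0∞)^((a:ℤ):ℝ))⁻¹ * V^(p-1)) := mul_le_mul_right hvol _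
    _ = 2^((1:ℝ) + (j:ℝ)*(p-1)) * wInt w P := by
        rw [hsplit]
        have ha2 : (2:ℝ≥0∞)^(((a:ℤ):ℝ)+1) = 2^((a:ℤ):ℝ) * 2 := by
          rw [ENNReal.rpow_add _ _ (by norm_num) (by norm_num), ENNReal.rpow_one]
        have hj2 : (2:ℝ≥0∞)^((1:ℝ) + (j:ℝ)*(p-1)) = 2 * 2^((j:ℝ)*(p-1)) := by
          rw [ENNReal.rpow_add _ _ (by norm_num) (by norm_num), ENNReal.rpow_one]
        rw [ha2, hj2]
        -- rearrange and cancel 2^a * (2^a)⁻¹ and (V^(p-1))⁻¹ * V^(p-1)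
        have c1 : (2:ℝ≥0∞)^((a:ℤ):ℝ) * ((2:ℝ≥0∞)^((a:ℤ):ℝ))⁻¹ = 1 :=
          ENNReal.mul_inv_cancel (two_rpow_pos _).ne' (two_rpow_ne_top _)
        have c2 : (V^(p-1))⁻¹ * V^(p-1) = 1 :=
          ENNReal.inv_mul_cancel hX0 hXt
        calc (2:ℝ≥0∞)^((a:ℤ):ℝ) * 2 * ((V^(p-1))⁻¹ * 2^((j:ℝ)*(p-1))) *
              (wInt w P * ((2:ℝ≥0∞)^((a:ℤ):ℝ))⁻¹ * V^(p-1))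
            = (2 * 2^((j:ℝ)*(p-1)) * wInt w P) *
              ((2:ℝ≥0∞)^((a:ℤ):ℝ) * ((2:ℝ≥0∞)^((a:ℤ):ℝ))⁻¹) * ((V^(p-1))⁻¹ * V^(p-1)) := by
              ring
          _ = 2 * 2^((j:ℝ)*(p-1)) * wInt w P := by rw [c1, c2, mul_one, mul_one]
          _ = 2 * 2^((j:ℝ)*(p-1)) * wInt w P := rfl

include hS in
lemma deep_depth {Q : Set (En n)} {j L : ℕ} {V : ℝ≥0∞}
    (hP2 : P ∈ stdDyadic n) (hSP2 : ∀ Q ∈ S, Q ⊆ P)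
    (hQ : Q ∈ deepSet S σ V j L) : L ≤ depthS S Q + 1 := by
  classical
  obtain ⟨hband, F, hcard, hFband, hFsup⟩ := hQ
  have hsub : ↑(F.erase Q) ⊆ {Q' | Q' ∈ S ∧ Q ⊂ Q'} := by
    intro Q' hQ'
    have hmem := Finset.mem_coe.mp hQ'
    rw [Finset.mem_erase] at hmem
    refine ⟨(hFband hmem.2).1, lt_of_le_of_ne (hFsup _ hmem.2) (Ne.symm hmem.1)⟩
  have h1 : (F.erase Q).card ≤ depthS S Q := by
    rw [← Set.ncard_coe_finset]
    exact Set.ncard_le_ncard hsub (strictSup_finite hS hP2 hSP2 hband.1)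
  have h2 : F.card ≤ (F.erase Q).card + 1 := by
    have hss : F ⊆ insert Q (F.erase Q) := by
      intro x hx
      by_cases h : x = Q
      · simp [h]
      · exact Finset.mem_insert_of_mem (Finset.mem_erase.mpr ⟨h, hx⟩)
    calc F.card ≤ (insert Q (F.erase Q)).card := Finset.card_le_card hss
      _ ≤ (F.erase Q).card + 1 := Finset.card_insert_le _ _
  omega

include hS in
lemma maxDeep_disjoint {V : ℝ≥0∞} (j L : ℕ) : (maxDeep S σ V j L).Pairwise Disjoint := by
  intro G1 h1 G2 h2 hne
  rw [Set.disjoint_iff_inter_eq_empty]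
  by_contra hcon
  rcases mem_nested hS h1.1.1.1 h2.1.1.1 (Set.nonempty_iff_ne_empty.mpr hcon) with h | h
  · exact hne (h1.2 G2 h2.1 h)
  · exact hne ((h2.2 G1 h1.1 h).symm)

include hS in
lemma deep_cover {V : ℝ≥0∞} {j L : ℕ} (hP2 : P ∈ stdDyadic n) (hSP2 : ∀ Q ∈ S, Q ⊆ P)
    {R : Set (En n)} (hR : R ∈ deepSet S σ V j L) :
    ∃ G ∈ maxDeep S σ V j L, R ⊆ G := by
  classical
  set C := {Q | Q ∈ deepSet S σ V j L ∧ R ⊆ Q} with hC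
  have hRS : R ∈ S := hR.1.1
  have hfin : C.Finite := (sup_finite hS hP2 hSP2 hRS).subset (fun Q h => ⟨h.1.1.1, h.2⟩)
  have hne : C.Nonempty := ⟨R, hR, subset_refl R⟩
  have hch : ∀ Q1 ∈ C, ∀ Q2 ∈ C, Q1 ⊆ Q2 ∨ Q2 ⊆ Q1 := fun Q1 h1 Q2 h2 =>
    sup_chain hS hRS ⟨h1.1.1.1, h1.2⟩ ⟨h2.1.1.1, h2.2⟩
  obtain ⟨G, hG, hgr⟩ := chain_exists_greatest hfin hne hch
  refine ⟨G, ⟨hG.1, fun Q hQ hGQ => ?_⟩, hG.2⟩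
  exact le_antisymm hGQ (hgr Q ⟨hQ, hG.2.trans hGQ⟩)

include hp hP hσ0 hσtop hPlow hS hSP hσQ hApQ in
lemma wInt_deep_le (j L : ℕ) :
    wInt w (⋃₀ deepSet S σ (avgSet σ P) j L)
      ≤ 2^((2:ℝ) + (j:ℝ)*(p-1) - (L:ℝ)) * wInt w P := by
  set V := avgSet σ P with hV
  set Bj := (2:ℝ≥0∞)^(((a:ℤ):ℝ)+1) * ((V * 2^(-(j:ℝ)))^(p-1))⁻¹ with hBj
  set D := deepSet S σ V j L with hD
  set M := maxDeep S σ V j L with hM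
  have hMS : M ⊆ S := fun Q hQ => hQ.1.1.1
  have hMcnt : M.Countable := sub_countable hS hMS
  haveI := hMcnt.to_subtype
  have hcover : ⋃₀ D ⊆ ⋃₀ M := by
    rintro x ⟨R, hR, hx⟩
    obtain ⟨G, hG, hRG⟩ := deep_cover hS hP hSP hR
    exact ⟨G, hG, hRG hx⟩
  have step1 : wInt w (⋃₀ D) ≤ ∑' (R : M), wInt w (R : Set (En n)) := by
    refine le_trans (lintegral_mono_set hcover) ?_
    rw [Set.sUnion_eq_iUnion]
    exact lintegral_iUnion_le _ _
  have step2 : ∀ R : M, wInt w (R : Set (En n)) ≤ Bj * volume (R : Set (En n)) := by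
    intro R
    have hRS : (R : Set (En n)) ∈ S := hMS R.2
    have h0 : volume (R : Set (En n)) ≠ 0 := (std_vol_pos (hS.1 hRS)).ne'
    have ht : volume (R : Set (En n)) ≠ ⊤ := (std_vol_lt_top (hS.1 hRS)).ne
    have heq : wInt w (R : Set (En n)) = volume (R : Set (En n)) * avgSet w R := by
      rw [avgSet, ← mul_assoc, ENNReal.mul_inv_cancel h0 ht, one_mul]
    rw [heq, mul_comm]
    exact mul_le_mul_left (band_avgw_le hp hσ0 hσtop hσQ hApQ R.2.1.1) _
  have hMG : ⋃₀ M ⊆ ⋃₀ genSet S (L-1) := by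
    rintro x ⟨R, hR, hx⟩
    have hRS : R ∈ S := hMS hR
    have hdep : L - 1 ≤ depthS S R := by
      have := deep_depth hS hP hSP hR.1
      omega
    obtain ⟨A, hAS, hRA, hdA⟩ := exists_ancestor hS hP hSP hRS hdep
    exact ⟨A, ⟨hAS, hdA⟩, hRA hx⟩
  have hfinal : Bj * (volume P * (2:ℝ≥0∞)⁻¹^(L-1)) ≤ 2^((2:ℝ) + (j:ℝ)*(p-1) - (L:ℝ)) * wInt w P := by
    calc Bj * (volume P * (2:ℝ≥0∞)⁻¹^(L-1)) 
        = (Bj * volume P) * (2:ℝ≥0∞)⁻¹^(L-1) := by ring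
      _ ≤ (2^((1:ℝ)+(j:ℝ)*(p-1)) * wInt w P) * (2:ℝ≥0∞)⁻¹^(L-1) :=
          mul_le_mul_left (Bj_volP hp hP hσ0 hσtop hPlow j) _
      _ = (2^((1:ℝ)+(j:ℝ)*(p-1)) * 2^(-(((L-1:ℕ)):ℝ))) * wInt w P := by
          rw [two_pow_inv_nat]; ring
      _ ≤ 2^((2:ℝ) + (j:ℝ)*(p-1) - (L:ℝ)) * wInt w P := by
          apply mul_le_mul_left
          rw [← ENNReal.rpow_add _ _ (by norm_num) (by norm_num)]
          apply ENNReal.rpow_le_rpow_of_exponent_le (by norm_num)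
          have hc : (L:ℝ) - 1 ≤ ((L-1:ℕ):ℝ) := by
            rcases Nat.eq_zero_or_pos L with h | h
            · simp [h]
            · rw [Nat.cast_sub h]; simp
          linarith
  calc wInt w (⋃₀ D) ≤ ∑' (R : M), wInt w (R : Set (En n)) := step1
    _ ≤ ∑' (R : M), Bj * volume (R : Set (En n)) := ENNReal.tsum_le_tsum step2
    _ = Bj * ∑' (R : M), volume (R : Set (En n)) := ENNReal.tsum_mul_left
    _ = Bj * volume (⋃₀ M) := by
        rw [measure_sUnion hMcnt (maxDeep_disjoint hS j L)
          (fun Q h => std_measurable (hS.1 (hMS h)))]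
    _ ≤ Bj * volume (⋃₀ genSet S (L-1)) := mul_le_mul_right (measure_mono hMG) _
    _ ≤ Bj * (volume P * (2:ℝ≥0∞)⁻¹^(L-1)) := mul_le_mul_right (vol_gen_le hS hP hSP (L-1)) _
    _ ≤ 2^((2:ℝ) + (j:ℝ)*(p-1) - (L:ℝ)) * wInt w P := hfinal

include hp hP hσ0 hσtop hS hSP hσQ hApQ in
lemma bad_subset {t : ℝ} (ht : 0 < t) :
    {x | x ∈ P ∧ ENNReal.ofReal t * avgSet σ P < sparseOpNN S σ x} ⊆
      ⋃ (j : ℕ), ⋃₀ deepSet S σ (avgSet σ P) j (Lfun t j) := by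
  classical
  intro x hx
  by_contra hcon
  simp only [Set.mem_iUnion, not_exists] at hcon
  set V := avgSet σ P with hV
  set C : ℕ → Set (Set (En n)) := fun j => {Q | Q ∈ bandSet S σ V j ∧ x ∈ Q} with hC
  have hCprop : ∀ j, (C j).Finite ∧ (C j).ncard ≤ Lfun t j - 1 := by
    intro j
    have hnoF : ¬ ∃ F : Finset (Set (En n)), ↑F ⊆ C j ∧ F.card = Lfun t j := by
      rintro ⟨F, hFC, hFcard⟩
      have hLpos : 0 < Lfun t j := Lfun_pos ht j
      have hFne : ((F : Set (Set (En n)))).Nonempty := by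
        rw [Finset.coe_nonempty]
        exact Finset.card_pos.mp (by omega)
      have hch : ∀ Q1 ∈ (F : Set (Set (En n))), ∀ Q2 ∈ (F : Set (Set (En n))),
          Q1 ⊆ Q2 ∨ Q2 ⊆ Q1 := by
        intro Q1 h1 Q2 h2
        exact stdDyadic_nested (hS.1 (hFC h1).1.1) (hS.1 (hFC h2).1.1)
          (hFC h1).2 (hFC h2).2
      obtain ⟨Q₀, hQ₀, hleast⟩ := chain_exists_least F.finite_toSet hFne hch
      apply hcon j
      refine ⟨Q₀, ⟨(hFC hQ₀).1, F, hFcard, fun Q' h => (hFC h).1, ?_⟩, (hFC hQ₀).2⟩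
      intro Q' hQ'
      exact hleast Q' (Finset.mem_coe.mpr hQ')
    have hfin : (C j).Finite := by
      by_contra hinf
      have hinf2 : (C j).Infinite := hinf
      obtain ⟨F, hFsub, hFcard⟩ := hinf2.exists_subset_card_eq (Lfun t j)
      exact hnoF ⟨F, hFsub, hFcard⟩
    refine ⟨hfin, ?_⟩
    · 
      by_contra hcard
      push_neg at hcard
      have hge : Lfun t j ≤ hfin.toFinset.card := by
        rw [← Set.ncard_eq_toFinset_card (C j) hfin]
        omega
      obtain ⟨F, hFsub, hFcard⟩ := Finset.exists_subset_card_eq hge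
      refine hnoF ⟨F, ?_, hFcard⟩
      intro Q hQ
      have := hFsub (Finset.mem_coe.mp hQ)
      simpa using this
  have hbound : sparseOpNN S σ x ≤ ENNReal.ofReal (t/2) * V := by
    have hpt : ∀ Q : S, Set.indicator (Q : Set (En n)) (fun _ => avgSet σ (Q : Set (En n))) x ≤
        ∑' j : ℕ, (C j).indicator (fun _ => V * 2^(1-(j:ℝ))) (Q : Set (En n)) := by
      intro Q
      by_cases hxQ : x ∈ (Q : Set (En n))
      · rw [Set.indicator_of_mem hxQ]
        obtain ⟨j₀, hj₀⟩ := band_exists hp hσ0 hσtop hσQ hApQ Q.2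
        have hQC : (Q : Set (En n)) ∈ C j₀ := ⟨hj₀, hxQ⟩
        refine le_trans ?_ (ENNReal.le_tsum j₀)
        rw [Set.indicator_of_mem hQC]
        exact hj₀.2.2
      · rw [Set.indicator_of_notMem hxQ]
        exact zero_le
    have hgeom : ∑' j : ℕ, ENNReal.ofReal (t/8 * (3/4)^j) = ENNReal.ofReal (t/2) := by
      rw [← ENNReal.ofReal_tsum_of_nonneg (fun j => by positivity)
        (by
          apply Summable.mul_left
          exact summable_geometric_of_lt_one (by norm_num) (by norm_num))]
      congr 1
      rw [tsum_mul_left, tsum_geometric_of_lt_one (by norm_num) (by norm_num)]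
      ring_nf
    calc sparseOpNN S σ x
        ≤ ∑' (Q : S) (j : ℕ), (C j).indicator (fun _ => V * 2^(1-(j:ℝ))) (Q : Set (En n)) :=
          ENNReal.tsum_le_tsum hpt
      _ = ∑' (j : ℕ) (Q : S), (C j).indicator (fun _ => V * 2^(1-(j:ℝ))) (Q : Set (En n)) :=
          ENNReal.tsum_comm
      _ ≤ ∑' (j : ℕ), ((Lfun t j - 1 : ℕ) : ℝ≥0∞) * (V * 2^(1-(j:ℝ))) := by
          apply ENNReal.tsum_le_tsum
          intro j
          exact tsum_ite_le (S : Set (Set (En n))) (hCprop j).1 _ (hCprop j).2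
      _ ≤ ∑' (j : ℕ), ENNReal.ofReal (t/8 * (3/4)^j) * V := by
          apply ENNReal.tsum_le_tsum
          intro j
          have hcast : ((Lfun t j - 1 : ℕ) : ℝ≥0∞) ≤ ENNReal.ofReal (t * (3/2)^j / 16) := by
            rw [← ENNReal.ofReal_natCast]
            exact ENNReal.ofReal_le_ofReal (Lfun_cast_le ht j)
          calc ((Lfun t j - 1 : ℕ) : ℝ≥0∞) * (V * 2^(1-(j:ℝ)))
              ≤ ENNReal.ofReal (t * (3/2)^j / 16) * (V * 2^(1-(j:ℝ))) :=
                mul_le_mul_left hcast _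
            _ = (ENNReal.ofReal (t * (3/2)^j / 16) * 2^(1-(j:ℝ))) * V := by ring
            _ = ENNReal.ofReal (t/8 * (3/4)^j) * V := by
                rw [two_rpow_eq, ← ENNReal.ofReal_mul (by positivity)]
                congr 1
                have he : (2:ℝ)^(1-(j:ℝ)) = 2 * ((2:ℝ)^(j:ℕ))⁻¹ := by
                  rw [Real.rpow_sub (by norm_num), Real.rpow_one, Real.rpow_natCast]
                  ring
                have hpow : ((3:ℝ)/2)^j * ((2:ℝ)^j)⁻¹ = (3/4)^j := by
                  rw [← inv_pow, ← mul_pow]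
                  norm_num
                rw [he, ← hpow]
                ring
      _ = (∑' (j : ℕ), ENNReal.ofReal (t/8 * (3/4)^j)) * V := ENNReal.tsum_mul_right
      _ = ENNReal.ofReal (t/2) * V := by rw [hgeom]
  have hlt := lt_of_lt_of_le hx.2 hbound
  have hle : ENNReal.ofReal (t/2) * V ≤ ENNReal.ofReal t * V :=
    mul_le_mul_left (ENNReal.ofReal_le_ofReal (by linarith)) _
  exact absurd hlt (not_lt.mpr hle)

end Main

/-- exponential decay for localized sparse operators: if every cube of
the sparse family `S` lies in `P`, has `σ`-average at most `2 ⨍_P σ` and has joint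
`A_p` product in `(2^a, 2^{a+1}]`, then
`w{x ∈ P : T^S σ(x) > t ⨍_P σ} ≤ C e^{-ct} w(P)`, with `c, C` depending only on `n, p`. -/
theorem stmt8 (n : ℕ) (p : ℝ) (hp : 1 < p) :
    ∃ c C : ℝ, 0 < c ∧ 0 < C ∧
      ∀ (a : ℤ) (P : Set (En n)), P ∈ stdDyadic n →
      ∀ w σ : En n → ℝ, IsWeightE w → IsWeightE σ →
        0 < avgSet σ P → avgSet σ P < ⊤ →
        (2 : ℝ≥0∞) ^ a < avgSet w P * avgSet σ P ^ (p - 1) →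
        avgSet w P * avgSet σ P ^ (p - 1) ≤ (2 : ℝ≥0∞) ^ (a + 1) →
      ∀ S : Set (Set (En n)), IsSparseFam S →
        (∀ Q ∈ S, Q ⊆ P) →
        (∀ Q ∈ S, avgSet σ Q ≤ 2 * avgSet σ P) →
        (∀ Q ∈ S, (2 : ℝ≥0∞) ^ a < avgSet w Q * avgSet σ Q ^ (p - 1) ∧
          avgSet w Q * avgSet σ Q ^ (p - 1) ≤ (2 : ℝ≥0∞) ^ (a + 1)) →
      ∀ t : ℝ, 0 < t →
        wInt w {x | x ∈ P ∧ ENNReal.ofReal t * avgSet σ P < sparseOpNN S σ x} ≤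
          ENNReal.ofReal (C * Real.exp (-c * t)) * wInt w P := by
  have hlog2 : 0 < Real.log 2 := Real.log_pos (by norm_num)
  set c : ℝ := Real.log 2 / 64 with hcdef
  set C : ℝ := 2 + Real.exp (c * (64 * (p + 2))) with hCdef
  have hc : 0 < c := by positivity
  have hC : 0 < C := by positivity
  refine ⟨c, C, hc, hC, ?_⟩
  intro a P hP w σ hw hσ hσ0 hσtop hPlow hPhigh S hS hSP hσQ hApQ t ht
  rcases le_or_gt t (64 * (p + 2)) with hcase | hcase
  · -- small t : trivial bound
    have h3 : Real.exp (c * t) * Real.exp (-c * t) = 1 := by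
      rw [← Real.exp_add]
      have : c * t + -c * t = 0 := by ring
      rw [this, Real.exp_zero]
    have h2 : Real.exp (c * t) ≤ C := by
      have h4 : Real.exp (c * t) ≤ Real.exp (c * (64 * (p + 2))) :=
        Real.exp_le_exp.mpr (mul_le_mul_of_nonneg_left hcase hc.le)
      have h5 : (0:ℝ) < Real.exp (c * (64 * (p+2))) := Real.exp_pos _
      rw [hCdef]
      linarith
    have h1 : (1:ℝ) ≤ C * Real.exp (-c * t) := by
      rw [← h3]
      exact mul_le_mul_of_nonneg_right h2 (Real.exp_nonneg _)
    have hscale : (1:ℝ≥0∞) ≤ ENNReal.ofReal (C * Real.exp (-c * t)) :=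
      ENNReal.one_le_ofReal.mpr h1
    calc wInt w {x | x ∈ P ∧ ENNReal.ofReal t * avgSet σ P < sparseOpNN S σ x}
        ≤ wInt w P := lintegral_mono_set (fun x hx => hx.1)
      _ ≤ ENNReal.ofReal (C * Real.exp (-c * t)) * wInt w P :=
          le_mul_of_one_le_left zero_le hscale
  · -- large t
    have hT : 64 * (p + 2) ≤ t := hcase.le
    have hsub := bad_subset hp hP hσ0 hσtop hS hSP hσQ hApQ ht
    have hexp : ∀ j : ℕ, (2:ℝ) + (j:ℝ)*(p-1) - (Lfun t j : ℝ) ≤ -t/64 - (j:ℝ) := by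
      intro j
      have hL := Lfun_ge ht j
      have hj0 : (0:ℝ) ≤ (j:ℝ) := Nat.cast_nonneg j
      have h32p : 32 * p ≤ t := by nlinarith
      nlinarith [mul_nonneg (sub_nonneg.mpr h32p) hj0]
    have hgeom : (∑' j : ℕ, (2:ℝ≥0∞)^(-t/64 - (j:ℝ))) = 2^(-t/64 : ℝ) * 2 := by
      have h1 : ∀ j : ℕ, (2:ℝ≥0∞)^(-t/64 - (j:ℝ)) = 2^(-t/64 : ℝ) * ((2:ℝ≥0∞)⁻¹)^j := by
        intro j
        rw [two_pow_inv_nat, sub_eq_add_neg,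
          ENNReal.rpow_add _ _ (by norm_num) (by norm_num)]
      rw [tsum_congr h1, ENNReal.tsum_mul_left, ENNReal.tsum_geometric,
        ENNReal.one_sub_inv_two, inv_inv]
    have hfin : (2:ℝ≥0∞)^(-t/64 : ℝ) * 2 ≤ ENNReal.ofReal (C * Real.exp (-c * t)) := by
      rw [two_rpow_eq]
      have h2 : ((2:ℝ≥0∞)) = ENNReal.ofReal 2 := by norm_num
      rw [h2, ← ENNReal.ofReal_mul (by positivity)]
      apply ENNReal.ofReal_le_ofReal
      have her : (2:ℝ)^(-t/64 : ℝ) = Real.exp (-c * t) := by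
        rw [Real.rpow_def_of_pos (by norm_num)]
        congr 1
        rw [hcdef]
        ring
      rw [her]
      have : Real.exp (-c*t) ≥ 0 := Real.exp_nonneg _
      have hC2 : (2:ℝ) ≤ C := by
        rw [hCdef]
        have := Real.exp_pos (c * (64 * (p+2)))
        linarith
      nlinarith
    calc wInt w {x | x ∈ P ∧ ENNReal.ofReal t * avgSet σ P < sparseOpNN S σ x}
        ≤ wInt w (⋃ (j : ℕ), ⋃₀ deepSet S σ (avgSet σ P) j (Lfun t j)) :=
          lintegral_mono_set hsub
      _ ≤ ∑' (j : ℕ), wInt w (⋃₀ deepSet S σ (avgSet σ P) j (Lfun t j)) :=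
          lintegral_iUnion_le _ _
      _ ≤ ∑' (j : ℕ), (2:ℝ≥0∞)^((2:ℝ) + (j:ℝ)*(p-1) - (Lfun t j : ℝ)) * wInt w P := by
          apply ENNReal.tsum_le_tsum
          intro j
          exact wInt_deep_le hp hP hσ0 hσtop hPlow hS hSP hσQ hApQ j (Lfun t j)
      _ ≤ ∑' (j : ℕ), (2:ℝ≥0∞)^(-t/64 - (j:ℝ)) * wInt w P := by
          apply ENNReal.tsum_le_tsum
          intro j
          exact mul_le_mul_left
            (ENNReal.rpow_le_rpow_of_exponent_le (by norm_num) (hexp j)) _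
      _ = (∑' (j : ℕ), (2:ℝ≥0∞)^(-t/64 - (j:ℝ))) * wInt w P := ENNReal.tsum_mul_right
      _ = ((2:ℝ≥0∞)^(-t/64 : ℝ) * 2) * wInt w P := by rw [hgeom]
      _ ≤ ENNReal.ofReal (C * Real.exp (-c * t)) * wInt w P := mul_le_mul_left hfin _
end
end

section
/- Let 1 < p < ∞ and r > 1, set p' = p/(p−1), Φ(t) := t^{p'r}, Φ₀(t) := t^{p'(r+1)/2} and γ := 1/(2(r+1)). Then for every cube Q in ℝⁿ of finite positive measure and every nonnegative measurable function f on Q: ‖f‖_{Φ₀,Q} ≤ ‖f‖_{Φ,Q}^{1−γ} · ((⨍_Q f^{p'})^{1/p'})^{γ}. In particular, for a weight σ this follows from the averaging inequality ⨍_Q σ^{(r+1)/2} ≤ (⨍_Q σ^r)^{(2r+1)/(4r)}·(⨍_Q σ)^{1/4}. -/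
noncomputable section
open MeasureTheory ENNReal Set Metric

/-- A Young function: continuous, convex and increasing on `[0,∞)`, with `Φ(0) = 0`
and `Φ(t)/t → ∞` as `t → ∞`. -/
def IsYoung (Φ : ℝ → ℝ) : Prop :=
  ContinuousOn Φ (Set.Ici 0) ∧ ConvexOn ℝ (Set.Ici 0) Φ ∧ MonotoneOn Φ (Set.Ici 0) ∧
    Φ 0 = 0 ∧ Filter.Tendsto (fun t => Φ t / t) Filter.atTop Filter.atTop

/-- The complementary (conjugate) Young function: `φ̄(t) = sup_{s > 0} (s*t - φ(s))`. -/
def conjYoung (Φ : ℝ → ℝ) (t : ℝ) : ℝ :=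
  sSup {u : ℝ | ∃ s : ℝ, 0 < s ∧ u = s * t - Φ s}

/-- `[φ]_{B_q} = ∫_{1/2}^∞ φ(t) t^{-q-1} dt`, as an extended nonnegative real. -/
def bpConst (q : ℝ) (Φ : ℝ → ℝ) : ℝ≥0∞ :=
  ∫⁻ t in Set.Ioi ((1 : ℝ) / 2), ENNReal.ofReal (Φ t / t ^ (q + 1))

/-- The Luxemburg norm `‖f‖_{Φ,Q} = inf {λ > 0 : ⨍_Q Φ(|f|/λ) ≤ 1}` (with value `∞`
if no such `λ` exists). -/
def luxNormE {n : ℕ} (Φ : ℝ → ℝ) (Q : Set (En n)) (f : En n → ℝ) : ℝ≥0∞ :=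
  ⨅ (lam : ℝ) (_ : 0 < lam)
    (_ : (volume Q)⁻¹ * ∫⁻ y in Q, ENNReal.ofReal (Φ (|f y| / lam)) ≤ 1),
    ENNReal.ofReal lam

/-- The bump constant `[w,σ]_{Φ,p} = sup_B (⨍_B w)^{1/p} ‖σ^{1/p'}‖_{Φ,B}` over balls. -/
def bumpBallE {n : ℕ} (p : ℝ) (Φ : ℝ → ℝ) (w σ : En n → ℝ) : ℝ≥0∞ :=
  ⨆ (c : En n) (r : ℝ) (_ : 0 < r),
    avgSet w (ball c r) ^ (1 / p) *
      luxNormE Φ (ball c r) (fun y => σ y ^ (1 / (p / (p - 1))))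

/-- The bump constant `[σ,w]_{Ψ,p} = sup_B ‖w^{1/p}‖_{Ψ,B} (⨍_B σ)^{1/p'}` over balls. -/
def bumpBallR {n : ℕ} (p : ℝ) (Ψ : ℝ → ℝ) (σ w : En n → ℝ) : ℝ≥0∞ :=
  ⨆ (c : En n) (r : ℝ) (_ : 0 < r),
    luxNormE Ψ (ball c r) (fun y => w y ^ (1 / p)) *
      avgSet σ (ball c r) ^ (1 / (p / (p - 1)))

/-- The dyadic bump constant `[w,σ]_{Φ,p}^𝒟 = sup_{Q ∈ 𝒟} (⨍_Q w)^{1/p} ‖σ^{1/p'}‖_{Φ,Q}`. -/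
def bumpDyadicE {n : ℕ} (p : ℝ) (Φ : ℝ → ℝ) (w σ : En n → ℝ) : ℝ≥0∞ :=
  ⨆ (Q : Set (En n)) (_ : Q ∈ stdDyadic n),
    avgSet w Q ^ (1 / p) * luxNormE Φ Q (fun y => σ y ^ (1 / (p / (p - 1))))

/-- The dyadic bump constant `[σ,w]_{Ψ,p}^𝒟 = sup_{Q ∈ 𝒟} ‖w^{1/p}‖_{Ψ,Q} (⨍_Q σ)^{1/p'}`. -/
def bumpDyadicR {n : ℕ} (p : ℝ) (Ψ : ℝ → ℝ) (σ w : En n → ℝ) : ℝ≥0∞ :=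
  ⨆ (Q : Set (En n)) (_ : Q ∈ stdDyadic n),
    luxNormE Ψ Q (fun y => w y ^ (1 / p)) * avgSet σ Q ^ (1 / (p / (p - 1)))

/-- An axis-parallel cube in `ℝⁿ` (half-open). -/
def IsCubeE {n : ℕ} (Q : Set (En n)) : Prop :=
  ∃ (a : En n) (h : ℝ), 0 < h ∧ Q = {x | ∀ i, a i ≤ x i ∧ x i < a i + h}


/-- volume of a half-open cube of side `h`. -/
lemma cube_vol {n : ℕ} (a : En n) (h : ℝ) :
    volume {x : En n | ∀ i, a i ≤ x i ∧ x i < a i + h} = ENNReal.ofReal h ^ n := by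
  have e := EuclideanSpace.volume_preserving_symm_measurableEquiv_toLp (Fin n)
  have hQ : {x : En n | ∀ i, a i ≤ x i ∧ x i < a i + h}
      = (MeasurableEquiv.toLp 2 (Fin n → ℝ)).symm ⁻¹'
        (Set.univ.pi fun i => Set.Ico (a i) (a i + h)) := by
    ext x; simp [Set.mem_pi]
  rw [hQ, e.measure_preimage (MeasurableSet.univ_pi fun i => measurableSet_Ico).nullMeasurableSet]
  rw [volume_pi_pi]
  simp [Real.volume_Ico]

/-- Luxemburg norm of a power Young function is the normalized `L^q` norm. -/
lemma lux_rpow {n : ℕ} (q : ℝ) (hq : 0 < q) (Q : Set (En n))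
    (f : En n → ℝ) (hf : ∀ x, 0 ≤ f x) :
    luxNormE (fun t => t ^ q) Q f
      = ((volume Q)⁻¹ * ∫⁻ y in Q, ENNReal.ofReal (f y) ^ q) ^ (1/q) := by
  set I : ℝ≥0∞ := (volume Q)⁻¹ * ∫⁻ y in Q, ENNReal.ofReal (f y) ^ q with hI
  have key : ∀ lam : ℝ, 0 < lam →
      (((volume Q)⁻¹ * ∫⁻ y in Q, ENNReal.ofReal ((|f y| / lam) ^ q) ≤ 1) ↔
        I ^ (1/q) ≤ ENNReal.ofReal lam) := by
    intro lam hlam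
    have hc0 : ENNReal.ofReal lam ^ q ≠ 0 := by
      simp [ENNReal.rpow_eq_zero_iff, ENNReal.ofReal_eq_zero, not_le, hlam, hq, hq.le,
        ENNReal.ofReal_ne_top]
    have hcT : ENNReal.ofReal lam ^ q ≠ ∞ :=
      ENNReal.rpow_ne_top_of_nonneg hq.le ENNReal.ofReal_ne_top
    have hpt : ∀ y, ENNReal.ofReal ((|f y| / lam) ^ q)
        = ENNReal.ofReal (f y) ^ q * (ENNReal.ofReal lam ^ q)⁻¹ := by
      intro y
      rw [abs_of_nonneg (hf y),
        ← ENNReal.ofReal_rpow_of_nonneg (div_nonneg (hf y) hlam.le) hq.le,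
        ENNReal.ofReal_div_of_pos hlam, ENNReal.div_rpow_of_nonneg _ _ hq.le, div_eq_mul_inv]
    have hint : (∫⁻ y in Q, ENNReal.ofReal ((|f y| / lam) ^ q))
        = (∫⁻ y in Q, ENNReal.ofReal (f y) ^ q) * (ENNReal.ofReal lam ^ q)⁻¹ := by
      rw [lintegral_congr hpt, lintegral_mul_const' _ _ (by simpa using hc0)]
    rw [hint, ← mul_assoc, ← hI, ← div_eq_mul_inv,
      ENNReal.div_le_iff hc0 hcT, one_mul]
    constructor
    · intro hle
      calc I ^ (1/q) ≤ (ENNReal.ofReal lam ^ q) ^ (1/q) :=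
            ENNReal.rpow_le_rpow hle (by positivity)
        _ = ENNReal.ofReal lam := by
            rw [← ENNReal.rpow_mul, mul_one_div, div_self hq.ne', ENNReal.rpow_one]
    · intro hle
      calc I = (I ^ (1/q)) ^ q := by
            rw [← ENNReal.rpow_mul, one_div_mul_cancel hq.ne', ENNReal.rpow_one]
        _ ≤ ENNReal.ofReal lam ^ q := ENNReal.rpow_le_rpow hle hq.le
  apply le_antisymm
  · rcases eq_top_or_lt_top (I ^ (1/q)) with htop | hlt
    · exact htop ▸ le_top
    · apply ENNReal.le_of_forall_pos_le_add
      intro ε hε _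
      have hlam : 0 < (I ^ (1/q)).toReal + ε := by positivity
      have hofc : ENNReal.ofReal ((I ^ (1/q)).toReal + ε) = I ^ (1/q) + ε := by
        rw [ENNReal.ofReal_add ENNReal.toReal_nonneg (by exact_mod_cast hε.le),
          ENNReal.ofReal_toReal hlt.ne, ENNReal.ofReal_coe_nnreal]
      refine iInf_le_of_le ((I ^ (1/q)).toReal + ε) (iInf_le_of_le hlam (iInf_le_of_le ?_ ?_))
      · rw [key _ hlam, hofc]; exact le_self_add
      · rw [hofc]
  · exact le_iInf fun lam => le_iInf fun hlam => le_iInf fun hcond => (key lam hlam).mp hcond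

/-- Cauchy–Schwarz for `ℝ≥0∞`-valued moments of a measure. -/
lemma avg_CS {α : Type*} [MeasurableSpace α] (μ : Measure α) {g : α → ℝ≥0∞}
    (hg : AEMeasurable g μ) (a b : ℝ) (ha : 0 ≤ a) (hb : 0 ≤ b) :
    ∫⁻ x, g x ^ ((a + b)/2) ∂μ
      ≤ (∫⁻ x, g x ^ a ∂μ) ^ (1/2 : ℝ) * (∫⁻ x, g x ^ b ∂μ) ^ (1/2 : ℝ) := by
  have h2 : (2 : ℝ).HolderConjugate 2 := Real.HolderConjugate.two_two
  have hpt : ∀ x : α, g x ^ ((a + b)/2) = g x ^ (a/2) * g x ^ (b/2) := by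
    intro x
    rw [← ENNReal.rpow_add_of_nonneg _ _ (by positivity) (by positivity), add_div]
  calc ∫⁻ x, g x ^ ((a + b)/2) ∂μ = ∫⁻ x, g x ^ (a/2) * g x ^ (b/2) ∂μ := lintegral_congr hpt
    _ ≤ (∫⁻ x, (g x ^ (a/2)) ^ (2:ℝ) ∂μ) ^ (1/2 : ℝ) *
          (∫⁻ x, (g x ^ (b/2)) ^ (2:ℝ) ∂μ) ^ (1/2 : ℝ) :=
        ENNReal.lintegral_mul_le_Lp_mul_Lq μ h2 (hg.pow_const _) (hg.pow_const _)
    _ = (∫⁻ x, g x ^ a ∂μ) ^ (1/2 : ℝ) * (∫⁻ x, g x ^ b ∂μ) ^ (1/2 : ℝ) := by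
        congr 1 <;> · congr 1; apply lintegral_congr; intro x
                      rw [← ENNReal.rpow_mul]; norm_num

/-- Lyapunov/Jensen: for a probability measure, `∫ h ≤ (∫ h^t)^{1/t}`. -/
lemma avg_jensen {α : Type*} [MeasurableSpace α] (μ : Measure α) (hμ : μ Set.univ = 1)
    {h : α → ℝ≥0∞} (hh : AEMeasurable h μ) {t : ℝ} (ht : 1 < t) :
    ∫⁻ x, h x ∂μ ≤ (∫⁻ x, h x ^ t ∂μ) ^ (1/t) := by
  have hc : t.HolderConjugate (t/(t-1)) := Real.HolderConjugate.conjExponent ht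
  have := ENNReal.lintegral_mul_le_Lp_mul_Lq μ hc hh aemeasurable_const (g := fun _ => 1)
  simpa [lintegral_one, hμ, ENNReal.one_rpow] using this

/-- Cauchy–Schwarz for normalized averages over a set of positive finite measure. -/
lemma avg_CS' {n : ℕ} (Q : Set (En n)) (h0 : volume Q ≠ 0) (hT : volume Q ≠ ∞)
    {g : En n → ℝ≥0∞} (hg : Measurable g) (a b : ℝ) (ha : 0 ≤ a) (hb : 0 ≤ b) :
    (volume Q)⁻¹ * ∫⁻ y in Q, g y ^ ((a + b)/2)
      ≤ ((volume Q)⁻¹ * ∫⁻ y in Q, g y ^ a) ^ (1/2 : ℝ) *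
        ((volume Q)⁻¹ * ∫⁻ y in Q, g y ^ b) ^ (1/2 : ℝ) := by
  set μ : Measure (En n) := (volume Q)⁻¹ • volume.restrict Q with hμdef
  have havg : ∀ G : En n → ℝ≥0∞, ∫⁻ x, G x ∂μ = (volume Q)⁻¹ * ∫⁻ y in Q, G y :=
    fun G => lintegral_smul_measure _ _
  have := avg_CS μ (hg.aemeasurable) a b ha hb
  rwa [havg, havg, havg] at this

/-- Jensen for normalized averages over a set of positive finite measure. -/
lemma avg_jensen' {n : ℕ} (Q : Set (En n)) (h0 : volume Q ≠ 0) (hT : volume Q ≠ ∞)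
    {g : En n → ℝ≥0∞} (hg : Measurable g) {t : ℝ} (ht : 1 < t) :
    (volume Q)⁻¹ * ∫⁻ y in Q, g y
      ≤ ((volume Q)⁻¹ * ∫⁻ y in Q, g y ^ t) ^ (1/t) := by
  set μ : Measure (En n) := (volume Q)⁻¹ • volume.restrict Q with hμdef
  have havg : ∀ G : En n → ℝ≥0∞, ∫⁻ x, G x ∂μ = (volume Q)⁻¹ * ∫⁻ y in Q, G y :=
    fun G => lintegral_smul_measure _ _
  have hμ1 : μ Set.univ = 1 := by
    rw [hμdef, Measure.smul_apply, smul_eq_mul, Measure.restrict_apply_univ]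
    exact ENNReal.inv_mul_cancel h0 hT
  have := avg_jensen μ hμ1 (hg.aemeasurable) ht
  rwa [havg, havg] at this

lemma key_arith (x y z : ℝ≥0∞) (p' r : ℝ) (hp' : 0 < p') (hr : 1 < r)
    (h1 : z ≤ x ^ (1/2 : ℝ) * y ^ (1/2 : ℝ)) (h2 : y ≤ x ^ (1/r)) :
    z ^ (1/(p' * ((r+1)/2))) ≤
      (x ^ (1/(p'*r))) ^ (1 - 1/(2*(r+1))) * (y ^ (1/p')) ^ (1/(2*(r+1))) := by
  have hr0 : 0 < r := lt_trans one_pos hr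
  have hr1 : (0:ℝ) < r + 1 := by linarith
  set E : ℝ := (1/2) * (1/(p'*((r+1)/2))) with hE
  set g : ℝ := (1/(2*(r+1)))/p' with hg
  have hgpos : 0 ≤ g := by positivity
  have e1 : E = g + g := by rw [hE, hg]; field_simp; ring
  have e2 : E + (1/r)*g = (1/(p'*r)) * (1 - 1/(2*(r+1))) := by
    rw [hE, hg]; field_simp; ring
  have e3 : g = (1/p') * (1/(2*(r+1))) := by rw [hg]; ring
  calc z ^ (1/(p' * ((r+1)/2)))
      ≤ (x ^ (1/2:ℝ) * y ^ (1/2:ℝ)) ^ (1/(p' * ((r+1)/2))) :=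
        ENNReal.rpow_le_rpow h1 (by positivity)
    _ = x ^ E * y ^ E := by
        rw [ENNReal.mul_rpow_of_nonneg _ _ (by positivity), ← ENNReal.rpow_mul,
          ← ENNReal.rpow_mul]
    _ = x ^ E * (y ^ g * y ^ g) := by
        rw [← ENNReal.rpow_add_of_nonneg _ _ hgpos hgpos, ← e1]
    _ ≤ x ^ E * ((x ^ (1/r)) ^ g * y ^ g) := by gcongr
    _ = (x ^ (1/(p'*r))) ^ (1 - 1/(2*(r+1))) * (y ^ (1/p')) ^ (1/(2*(r+1))) := by
        rw [← ENNReal.rpow_mul x, ← mul_assoc,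
          ← ENNReal.rpow_add_of_nonneg _ _ (by positivity) (by positivity),
          e2, e3, ENNReal.rpow_mul x, ENNReal.rpow_mul y]

lemma key_arith2 (x y z : ℝ≥0∞) (r : ℝ) (hr : 1 < r)
    (h1 : z ≤ x ^ (1/2 : ℝ) * y ^ (1/2 : ℝ)) (h2 : y ≤ x ^ (1/r)) :
    z ≤ x ^ ((2*r+1)/(4*r)) * y ^ ((1:ℝ)/4) := by
  have hr0 : 0 < r := lt_trans one_pos hr
  have e2 : (1/2 : ℝ) + (1/r)*(1/4) = (2*r+1)/(4*r) := by field_simp; ring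
  calc z ≤ x ^ (1/2:ℝ) * y ^ (1/2:ℝ) := h1
    _ = x ^ (1/2:ℝ) * (y ^ (1/4:ℝ) * y ^ (1/4:ℝ)) := by
        rw [← ENNReal.rpow_add_of_nonneg _ _ (by norm_num) (by norm_num)]; norm_num
    _ ≤ x ^ (1/2:ℝ) * ((x ^ (1/r)) ^ (1/4:ℝ) * y ^ (1/4:ℝ)) := by gcongr
    _ = x ^ ((2*r+1)/(4*r)) * y ^ ((1:ℝ)/4) := by
        rw [← ENNReal.rpow_mul x, ← mul_assoc,
          ← ENNReal.rpow_add_of_nonneg _ _ (by norm_num) (by positivity), e2]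

/-- for `Φ(t) = t^{p'r}`, `Φ₀(t) = t^{p'(r+1)/2}` and `γ = 1/(2(r+1))`,
the Luxemburg norms satisfy `‖f‖_{Φ₀,Q} ≤ ‖f‖_{Φ,Q}^{1-γ} ((⨍_Q f^{p'})^{1/p'})^γ` on
every cube, and for every weight `σ` one has the averaging inequality
`⨍_Q σ^{(r+1)/2} ≤ (⨍_Q σ^r)^{(2r+1)/(4r)} (⨍_Q σ)^{1/4}`. -/
theorem stmt17 (n : ℕ) (p r : ℝ) (hp : 1 < p) (hr : 1 < r)
    (Q : Set (En n)) (hQ : IsCubeE Q) :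
    (∀ f : En n → ℝ, (∀ x, 0 ≤ f x) → Measurable f →
      luxNormE (fun t => t ^ (p / (p - 1) * ((r + 1) / 2))) Q f ≤
        luxNormE (fun t => t ^ (p / (p - 1) * r)) Q f ^ (1 - 1 / (2 * (r + 1))) *
          (((volume Q)⁻¹ * ∫⁻ y in Q, ENNReal.ofReal (f y) ^ (p / (p - 1))) ^
              (1 / (p / (p - 1)))) ^ (1 / (2 * (r + 1)))) ∧
    (∀ σ : En n → ℝ, IsWeightE σ →
      (volume Q)⁻¹ * ∫⁻ y in Q, ENNReal.ofReal (σ y) ^ ((r + 1) / 2) ≤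
        ((volume Q)⁻¹ * ∫⁻ y in Q, ENNReal.ofReal (σ y) ^ r) ^ ((2 * r + 1) / (4 * r)) *
          ((volume Q)⁻¹ * ∫⁻ y in Q, ENNReal.ofReal (σ y)) ^ ((1 : ℝ) / 4)) := by
  obtain ⟨a, h, hh, hQeq⟩ := hQ
  have hvol : volume Q = ENNReal.ofReal h ^ n := by rw [hQeq]; exact cube_vol a h
  have h0 : volume Q ≠ 0 := by
    rw [hvol]
    exact pow_ne_zero n (by simp [ENNReal.ofReal_eq_zero, not_le, hh])
  have hT : volume Q ≠ ∞ := by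
    rw [hvol]
    exact ENNReal.pow_ne_top ENNReal.ofReal_ne_top
  have hr0 : (0:ℝ) < r := lt_trans one_pos hr
  have hp1 : (0:ℝ) < p - 1 := by linarith
  have hp' : 0 < p / (p - 1) := div_pos (by linarith) hp1
  constructor
  · intro f hf0 hfm
    have hgm : Measurable fun y => ENNReal.ofReal (f y) := hfm.ennreal_ofReal
    rw [lux_rpow _ (by positivity) Q f hf0, lux_rpow _ (by positivity) Q f hf0]
    have h1 := avg_CS' Q h0 hT hgm (p/(p-1)*r) (p/(p-1)) (by positivity) hp'.le
    rw [show (p/(p-1)*r + p/(p-1))/2 = p/(p-1)*((r+1)/2) by ring] at h1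
    have h2 := avg_jensen' Q h0 hT (g := fun y => ENNReal.ofReal (f y) ^ (p/(p-1)))
      (hgm.pow_const _) hr
    simp only [← ENNReal.rpow_mul] at h2
    exact key_arith _ _ _ (p/(p-1)) r hp' hr h1 h2
  · intro σ hσ
    have hgm : Measurable fun y => ENNReal.ofReal (σ y) := hσ.2.1.ennreal_ofReal
    have h1 := avg_CS' Q h0 hT hgm r 1 hr0.le zero_le_one
    simp only [ENNReal.rpow_one] at h1
    have h2 := avg_jensen' Q h0 hT hgm hr
    exact key_arith2 _ _ _ r hr h1 h2
end
end
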